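/- Fix 1 < α < 2, let q₀(t) = log(e/t), ρ(s) = (1 + ((2−α)/(α−1)) ∫_s^1 dt/(t^{1/(α−1)} q₀(t)^{1/(α−1)}))^{(α−1)/(α−2)} for s ∈ (0,1], and f(z) = (z/|z|)·ρ(|z|) for z ∈ 𝔻\{0}, f(0) = 0. Then at every z ∈ 𝔻\{0}, l(f′(z)) = |f_z| − |f_z̄| = (1 + ((2−α)/(α−1)) ∫_{|z|}^1 dt/(t^{1/(α−1)} q₀(t)^{1/(α−1)}))^{1/(α−2)} · 1/(|z|^{1/(α−1)} q₀(|z|)^{1/(α−1)}). -/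

import Mathlib

/-!
STATEMENT 12: For `1 < α < 2` and the radial mapping `f(z) = (z/|z|)ρ(|z|)`, `f(0)=0`,
at every `z ∈ 𝔻 \ {0}`,
`l(f′(z)) = |f_z| - |f_z̄|
  = (1 + ((2-α)/(α-1))∫_{|z|}^1 dt/(t^{1/(α-1)} q₀(t)^{1/(α-1)}))^{1/(α-2)}
    · 1/(|z|^{1/(α-1)} q₀(|z|)^{1/(α-1)})`, where `q₀(t) = log(e/t)`.
-/

open MeasureTheory Set ENNReal

noncomputable section

/-- The kernel `t ↦ 1/(t^{1/(α-1)} (log(e/t))^{1/(α-1)})`. -/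
def kern (α : ℝ) (t : ℝ) : ℝ :=
  1 / (t ^ (1 / (α - 1)) * (Real.log (Real.exp 1 / t)) ^ (1 / (α - 1)))

/-- The radial profile `ρ`. -/
def rho (α : ℝ) (s : ℝ) : ℝ :=
  (1 + ((2 - α) / (α - 1)) * ∫ t in s..1, kern α t) ^ ((α - 1) / (α - 2))

/-- The radial mapping `f(z) = (z/|z|)·ρ(|z|)`, `f(0) = 0`. -/
def fmap (α : ℝ) (z : ℂ) : ℂ :=
  if z = 0 then 0 else (z / (‖z‖ : ℂ)) * (rho α ‖z‖ : ℂ)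

/-- `f_z = (f_x - i f_y)/2`. -/
def wirtP (f : ℂ → ℂ) (z : ℂ) : ℂ :=
  (fderiv ℝ f z 1 - Complex.I * fderiv ℝ f z Complex.I) / 2

/-- `f_z̄ = (f_x + i f_y)/2`. -/
def wirtM (f : ℂ → ℂ) (z : ℂ) : ℂ :=
  (fderiv ℝ f z 1 + Complex.I * fderiv ℝ f z Complex.I) / 2

lemma q0_pos {t : ℝ} (ht : 0 < t) (hte : t < Real.exp 1) : 0 < Real.log (Real.exp 1 / t) := by
  rw [Real.log_div (Real.exp_ne_zero 1) (ne_of_gt ht), Real.log_exp]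
  have : Real.log t < Real.log (Real.exp 1) := Real.log_lt_log ht hte
  rw [Real.log_exp] at this
  linarith

lemma one_lt_exp_one : (1:ℝ) < Real.exp 1 := by
  have := Real.exp_one_gt_d9; linarith

lemma kern_pos (α : ℝ) {t : ℝ} (ht : 0 < t) (hte : t < Real.exp 1) : 0 < kern α t := by
  have h1 := q0_pos ht hte
  unfold kern
  positivity

lemma kern_contOn (α : ℝ) : ContinuousOn (kern α) (Ioo 0 (Real.exp 1)) := by
  have : ∀ t ∈ Ioo (0:ℝ) (Real.exp 1),
      t ^ (1 / (α - 1)) * (Real.log (Real.exp 1 / t)) ^ (1 / (α - 1)) ≠ 0 := by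
    intro t ht
    have h1 := q0_pos ht.1 ht.2
    have h2 := ht.1
    positivity
  apply ContinuousOn.div continuousOn_const _ this
  apply ContinuousOn.mul
  · exact (continuousOn_id).rpow_const (fun t ht => Or.inl (ne_of_gt ht.1))
  · apply ContinuousOn.rpow_const
    · apply ContinuousOn.log
      · exact continuousOn_const.div continuousOn_id (fun t ht => ne_of_gt ht.1)
      · intro t ht
        have := Real.exp_pos 1
        have := ht.1
        positivity
    · intro t ht; exact Or.inl (ne_of_gt (q0_pos ht.1 ht.2))

lemma kern_intble (α : ℝ) {s : ℝ} (hs : 0 < s) (hs1 : s ≤ 1) :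
    IntervalIntegrable (kern α) volume s 1 := by
  apply ContinuousOn.intervalIntegrable
  apply (kern_contOn α).mono
  rw [uIcc_of_le hs1]
  exact fun t ht => ⟨lt_of_lt_of_le hs ht.1, lt_of_le_of_lt ht.2 one_lt_exp_one⟩

def Afun (α : ℝ) (s : ℝ) : ℝ := 1 + ((2 - α) / (α - 1)) * ∫ t in s..1, kern α t

lemma Afun_hasDeriv (α : ℝ) {s : ℝ} (hs : 0 < s) (hs1 : s ≤ 1) :
    HasDerivAt (Afun α) (-(((2 - α) / (α - 1)) * kern α s)) s := by
  have hmem : Ioo (0:ℝ) (Real.exp 1) ∈ nhds s :=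
    Ioo_mem_nhds hs (lt_of_le_of_lt hs1 one_lt_exp_one)
  have hcont : ContinuousAt (kern α) s := (kern_contOn α).continuousAt hmem
  have hmeas : StronglyMeasurableAtFilter (kern α) (nhds s) volume :=
    ⟨Ioo 0 (Real.exp 1), hmem, (kern_contOn α).aestronglyMeasurable measurableSet_Ioo⟩
  have h1 : HasDerivAt (fun u => ∫ t in (1:ℝ)..u, kern α t) (kern α s) s :=
    intervalIntegral.integral_hasDerivAt_right ((kern_intble α hs hs1).symm) hmeas hcont
  have h2 : HasDerivAt (fun u => ∫ t in u..(1:ℝ), kern α t) (-(kern α s)) s := by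
    have h := h1.neg
    have heq : (fun u => ∫ t in u..(1:ℝ), kern α t) = fun u => -∫ t in (1:ℝ)..u, kern α t := by
      funext u; rw [intervalIntegral.integral_symm]
    rw [heq]
    exact h
  have := (h2.const_mul ((2 - α) / (α - 1))).const_add 1
  refine this.congr_deriv ?_
  ring

lemma Afun_poss (α : ℝ) (hα₁ : 1 < α) (hα₂ : α < 2) {s : ℝ} (hs : 0 < s) (hs1 : s ≤ 1) :
    1 ≤ Afun α s := by
  unfold Afun
  have hc : 0 < (2 - α) / (α - 1) := by
    apply div_pos <;> linarith
  have hint : 0 ≤ ∫ t in s..1, kern α t := by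
    apply intervalIntegral.integral_nonneg hs1
    intro t ht
    exact (kern_pos α (lt_of_lt_of_le hs ht.1) (lt_of_le_of_lt ht.2 one_lt_exp_one)).le
  nlinarith

lemma rho_hasDeriv (α : ℝ) (hα₁ : 1 < α) (hα₂ : α < 2) {s : ℝ} (hs : 0 < s) (hs1 : s ≤ 1) :
    HasDerivAt (fun u => (Afun α u) ^ ((α - 1) / (α - 2)))
      ((Afun α s) ^ (1 / (α - 2)) * kern α s) s := by
  have hA := Afun_hasDeriv α hs hs1
  have hApos : (0:ℝ) < Afun α s := lt_of_lt_of_le one_pos (Afun_poss α hα₁ hα₂ hs hs1)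
  have h := hA.rpow_const (p := (α - 1) / (α - 2)) (Or.inl (ne_of_gt hApos))
  convert h using 1
  have h1 : α - 1 ≠ 0 := by intro hh; nlinarith
  have h2 : α - 2 ≠ 0 := by intro hh; nlinarith
  have he : (α - 1) / (α - 2) - 1 = 1 / (α - 2) := by
    field_simp
    norm_num
  rw [he]
  have key : -((2 - α) / (α - 1) * kern α s) * ((α - 1) / (α - 2)) = kern α s := by
    field_simp
    ring
  rw [key]
  ring

lemma q_hasDeriv {s : ℝ} (hs : 0 < s) :
    HasDerivAt (fun t => Real.log (Real.exp 1 / t)) (-s⁻¹) s := by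
  have h0 : HasDerivAt (fun t : ℝ => 1 - Real.log t) (-s⁻¹) s := by
    simpa using ((Real.hasDerivAt_log (ne_of_gt hs)).const_sub 1)
  apply h0.congr_of_eventuallyEq
  filter_upwards [eventually_gt_nhds hs] with t ht
  rw [Real.log_div (Real.exp_ne_zero 1) (ne_of_gt ht), Real.log_exp]

lemma kern_hasDeriv (α : ℝ) {s : ℝ} (hs : 0 < s) (hse : s < Real.exp 1) :
    HasDerivAt (kern α)
      (-((1 / (α - 1)) * s ^ (1 / (α - 1) - 1) *
            (Real.log (Real.exp 1 / s)) ^ (1 / (α - 1)) +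
          s ^ (1 / (α - 1)) *
            (-s⁻¹ * (1 / (α - 1)) * (Real.log (Real.exp 1 / s)) ^ (1 / (α - 1) - 1))) /
        (s ^ (1 / (α - 1)) * (Real.log (Real.exp 1 / s)) ^ (1 / (α - 1))) ^ 2) s := by
  set β := 1 / (α - 1) with hβ
  have hq0 : 0 < Real.log (Real.exp 1 / s) := q0_pos hs hse
  have hqd : HasDerivAt (fun t => (Real.log (Real.exp 1 / t)) ^ β)
      (-s⁻¹ * β * (Real.log (Real.exp 1 / s)) ^ (β - 1)) s :=
    (q_hasDeriv hs).rpow_const (Or.inl (ne_of_gt hq0))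
  have hsd : HasDerivAt (fun t : ℝ => t ^ β) (β * s ^ (β - 1)) s :=
    Real.hasDerivAt_rpow_const (Or.inl (ne_of_gt hs))
  have hP : HasDerivAt (fun t => t ^ β * (Real.log (Real.exp 1 / t)) ^ β)
      (β * s ^ (β - 1) * (Real.log (Real.exp 1 / s)) ^ β +
        s ^ β * (-s⁻¹ * β * (Real.log (Real.exp 1 / s)) ^ (β - 1))) s := hsd.mul hqd
  have hP0 : s ^ β * (Real.log (Real.exp 1 / s)) ^ β ≠ 0 := by positivity
  have h := hP.inv hP0
  have heq : kern α = fun t => (t ^ β * (Real.log (Real.exp 1 / t)) ^ β)⁻¹ := by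
    funext t; rw [kern, one_div, hβ]
  rw [heq]
  exact h

lemma psi_deriv_nonneg (α : ℝ) (hα₁ : 1 < α) (hα₂ : α < 2) {s : ℝ} (hs : 0 < s)
    (hs1 : s ≤ 1) :
    ∃ D, HasDerivAt (fun u => u * kern α u - Afun α u) D s ∧ 0 ≤ D := by
  have hse : s < Real.exp 1 := lt_of_le_of_lt hs1 one_lt_exp_one
  have hk := kern_hasDeriv α hs hse
  have hsk : HasDerivAt (fun u => u * kern α u)
      (1 * kern α s + s * _) s := (hasDerivAt_id s).mul hk
  have hψ := hsk.sub (Afun_hasDeriv α hs hs1)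
  refine ⟨_, hψ, ?_⟩
  set β := 1 / (α - 1) with hβ
  set q := Real.log (Real.exp 1 / s) with hqdef
  have hq0 : 0 < q := q0_pos hs hse
  have ha1 : α - 1 ≠ 0 := by intro hh; nlinarith
  -- abbreviations
  have hsb : s ^ β = s * s ^ (β - 1) := by
    nth_rewrite 1 [show β = 1 + (β - 1) by ring]
    rw [Real.rpow_add hs, Real.rpow_one]
  have hqb : q ^ β = q * q ^ (β - 1) := by
    nth_rewrite 1 [show β = 1 + (β - 1) by ring]
    rw [Real.rpow_add hq0, Real.rpow_one]
  have hkern : kern α s = 1 / (s ^ β * q ^ β) := rfl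
  set A1 := s ^ (β - 1) with hA1
  set B1 := q ^ (β - 1) with hB1
  have hA1p : 0 < A1 := Real.rpow_pos_of_pos hs _
  have hB1p : 0 < B1 := Real.rpow_pos_of_pos hq0 _
  have hβc : 1 + (2 - α) / (α - 1) = β := by
    rw [hβ]; field_simp; norm_num
  rw [hkern, hsb, hqb]
  have key : 1 * (1 / (s * A1 * (q * B1))) +
      s * (-(β * A1 * (q * B1) + s * A1 * (-s⁻¹ * β * B1)) / (s * A1 * (q * B1)) ^ 2) -
      -((2 - α) / (α - 1) * (1 / (s * A1 * (q * B1)))) =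
      β * (s * A1 * B1) / (s * A1 * (q * B1)) ^ 2 := by
    rw [← hβc]
    field_simp
    ring
  rw [key]
  have hβp : (0:ℝ) < β := by
    rw [hβ]
    have : (0:ℝ) < α - 1 := by linarith
    positivity
  apply div_nonneg
  · exact mul_nonneg hβp.le (by positivity)
  · positivity

lemma kern_one (α : ℝ) : kern α 1 = 1 := by
  rw [kern, div_one, Real.log_exp, Real.one_rpow]; norm_num

lemma rkern_le_Afun (α : ℝ) (hα₁ : 1 < α) (hα₂ : α < 2) {r : ℝ} (hr : 0 < r) (hr1 : r ≤ 1) :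
    r * kern α r ≤ Afun α r := by
  set ψ := fun u => u * kern α u - Afun α u with hψdef
  have hmono : MonotoneOn ψ (Icc r 1) := by
    have hdiff : ∀ x ∈ Icc r 1, ∃ D, HasDerivAt ψ D x ∧ 0 ≤ D := fun x hx =>
      psi_deriv_nonneg α hα₁ hα₂ (lt_of_lt_of_le hr hx.1) hx.2
    apply monotoneOn_of_deriv_nonneg (convex_Icc r 1)
    · intro x hx
      obtain ⟨D, hD, _⟩ := hdiff x hx
      exact hD.continuousAt.continuousWithinAt
    · intro x hx
      rw [interior_Icc] at hx
      obtain ⟨D, hD, _⟩ := hdiff x ⟨hx.1.le, hx.2.le⟩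
      exact hD.differentiableAt.differentiableWithinAt
    · intro x hx
      rw [interior_Icc] at hx
      obtain ⟨D, hD, hD0⟩ := hdiff x ⟨hx.1.le, hx.2.le⟩
      rw [hD.deriv]
      exact hD0
  have h1 : ψ r ≤ ψ 1 := hmono ⟨le_refl r, hr1⟩ ⟨hr1, le_refl 1⟩ hr1
  have h2 : ψ 1 = 0 := by
    simp [hψdef, kern_one, Afun, intervalIntegral.integral_same]
  rw [h2] at h1
  simpa [hψdef, sub_nonpos] using h1


def Ln (z : ℂ) : ℂ →L[ℝ] ℝ :=
  (‖z‖⁻¹ * z.re) • Complex.reCLM + (‖z‖⁻¹ * z.im) • Complex.imCLM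

lemma norm_hasFDeriv {z : ℂ} (hz : z ≠ 0) :
    HasFDerivAt (fun w : ℂ => ‖w‖) (Ln z) z := by
  have hr : 0 < ‖z‖ := norm_pos_iff.mpr hz
  have hq : HasFDerivAt (fun w : ℂ => w.re * w.re + w.im * w.im)
      ((z.re • Complex.reCLM + z.re • Complex.reCLM) +
       (z.im • Complex.imCLM + z.im • Complex.imCLM)) z := by
    have h1 := (Complex.reCLM.hasFDerivAt (x := z)).mul (Complex.reCLM.hasFDerivAt (x := z))
    have h2 := (Complex.imCLM.hasFDerivAt (x := z)).mul (Complex.imCLM.hasFDerivAt (x := z))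
    exact h1.add h2
  have hqz : z.re * z.re + z.im * z.im ≠ 0 := by
    have := Complex.normSq_pos.mpr hz
    rw [Complex.normSq_apply] at this
    exact ne_of_gt this
  have hsqrt : HasDerivAt Real.sqrt (1 / (2 * Real.sqrt (z.re * z.re + z.im * z.im)))
      (z.re * z.re + z.im * z.im) := Real.hasDerivAt_sqrt hqz
  have hcomp := hsqrt.comp_hasFDerivAt z hq
  have heq : (fun w : ℂ => ‖w‖) = fun w => Real.sqrt (w.re * w.re + w.im * w.im) := by
    funext w
    rw [Complex.norm_def, Complex.normSq_apply]
  rw [heq]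
  refine hcomp.congr_fderiv ?_
  have hs : Real.sqrt (z.re * z.re + z.im * z.im) = ‖z‖ := by
    rw [Complex.norm_def, Complex.normSq_apply]
  ext h <;>
  · simp [Ln, hs]
    ring

lemma fmap_hasFDeriv {z : ℂ} (hz : z ≠ 0) (ρ : ℝ → ℝ) (P' : ℝ)
    (hρ : HasDerivAt ρ P' ‖z‖) :
    HasFDerivAt (fun w : ℂ => if w = 0 then 0 else (w / (‖w‖ : ℂ)) * (ρ ‖w‖ : ℂ))
      (((ρ ‖z‖ : ℂ) * ((‖z‖ : ℂ))⁻¹) • ContinuousLinearMap.id ℝ ℂ +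
        z • ((ρ ‖z‖ : ℂ) • (-(((‖z‖:ℂ)) ^ 2)⁻¹ • (Complex.ofRealCLM.comp (Ln z))) +
          (((‖z‖:ℂ))⁻¹) • (Complex.ofRealCLM.comp (P' • Ln z)))) z := by
  have hr : 0 < ‖z‖ := norm_pos_iff.mpr hz
  have hn := norm_hasFDeriv hz
  have hρw : HasFDerivAt (fun w : ℂ => ((ρ ‖w‖ : ℝ) : ℂ))
      (Complex.ofRealCLM.comp (P' • Ln z)) z :=
    Complex.ofRealCLM.hasFDerivAt.comp z (hρ.comp_hasFDerivAt z hn)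
  have hc : HasFDerivAt (fun w : ℂ => ((‖w‖ : ℝ) : ℂ)) (Complex.ofRealCLM.comp (Ln z)) z :=
    Complex.ofRealCLM.hasFDerivAt.comp z hn
  have hcne : ((‖z‖ : ℝ) : ℂ) ≠ 0 := by
    simpa using ne_of_gt hr
  have hinv := ((hasFDerivAt_inv (𝕜 := ℂ) hcne).restrictScalars ℝ).comp z hc
  have hG := hρw.mul hinv
  have hF := (hasFDerivAt_id z).mul hG
  have heq : (fun w : ℂ => if w = 0 then 0 else (w / (‖w‖ : ℂ)) * (ρ ‖w‖ : ℂ)) =ᶠ[nhds z]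
      (fun w : ℂ => w * ((ρ ‖w‖ : ℂ) * (((‖w‖:ℝ) : ℂ))⁻¹)) := by
    filter_upwards [isOpen_compl_singleton.mem_nhds hz] with w hw
    have hw' : w ≠ 0 := hw
    rw [if_neg hw']
    field_simp
  refine (HasFDerivAt.congr_of_eventuallyEq ?_ heq)
  refine hF.congr_fderiv ?_
  ext h
  simp [ContinuousLinearMap.smulRight_apply, Complex.ofReal_inv]
  ring

set_option maxHeartbeats 1000000 in
lemma eval_test {z : ℂ} (hz : z ≠ 0) (ρ : ℝ → ℝ) (P' : ℝ)
    (hρ : HasDerivAt ρ P' ‖z‖) :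
    wirtP (fun w : ℂ => if w = 0 then 0 else (w / (‖w‖ : ℂ)) * (ρ ‖w‖ : ℂ)) z =
      (((ρ ‖z‖ / ‖z‖ + P') / 2 : ℝ) : ℂ) ∧
    wirtM (fun w : ℂ => if w = 0 then 0 else (w / (‖w‖ : ℂ)) * (ρ ‖w‖ : ℂ)) z =
      z ^ 2 * (((P' * ‖z‖ - ρ ‖z‖) / (2 * ‖z‖ ^ 3) : ℝ) : ℂ) := by
  have hr : 0 < ‖z‖ := norm_pos_iff.mpr hz
  have hF := fmap_hasFDeriv hz ρ P' hρ
  have hfd := hF.fderiv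
  have hzz : (z.re : ℂ) * z.re + (z.im : ℂ) * z.im = (‖z‖ : ℂ) * ‖z‖ := by
    have h1 : Complex.normSq z = ‖z‖ * ‖z‖ := by
      rw [Complex.normSq_eq_norm_sq, sq]
    have h2 := congrArg Complex.ofReal h1
    rw [Complex.normSq_apply] at h2
    push_cast at h2
    exact h2
  have hrne : (‖z‖ : ℂ) ≠ 0 := by simpa using ne_of_gt hr
  set rv := ‖z‖ with hrv
  set ρv := ρ rv with hρv
  constructor
  · rw [wirtP, hfd]
    simp only [ContinuousLinearMap.add_apply, ContinuousLinearMap.smul_apply,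
      ContinuousLinearMap.coe_id', id_eq, ContinuousLinearMap.coe_comp', Function.comp_apply,
      Complex.ofRealCLM_apply, Ln, Complex.reCLM_apply, Complex.imCLM_apply,
      Complex.one_re, Complex.one_im, Complex.I_re, Complex.I_im, smul_eq_mul,
      Complex.real_smul, neg_smul]
    push_cast
    set X := (z.re : ℂ) with hX
    set Y := (z.im : ℂ) with hY
    have hz' : z = X + Y * Complex.I := by
      rw [hX, hY]; exact (Complex.re_add_im z).symm
    rw [← hrv, hz']
    have hI : Complex.I ^ 2 = -1 := Complex.I_sq
    field_simp
    have hu : (rv:ℂ) * ((rv:ℂ))⁻¹ = 1 := mul_inv_cancel₀ hrne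
    set u : ℂ := ((rv:ℂ))⁻¹ with hudef
    set R : ℂ := (rv:ℂ) with hRdef
    linear_combination
      (-(ρv:ℂ) + R*(P':ℂ)) * hzz +
      (-(ρv:ℂ)*R^2 + ((ρv:ℂ) - R*(P':ℂ))*Y^2) * hI
  · rw [wirtM, hfd]
    simp only [ContinuousLinearMap.add_apply, ContinuousLinearMap.smul_apply,
      ContinuousLinearMap.coe_id', id_eq, ContinuousLinearMap.coe_comp', Function.comp_apply,
      Complex.ofRealCLM_apply, Ln, Complex.reCLM_apply, Complex.imCLM_apply,
      Complex.one_re, Complex.one_im, Complex.I_re, Complex.I_im, smul_eq_mul,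
      Complex.real_smul, neg_smul]
    push_cast
    set X := (z.re : ℂ) with hX
    set Y := (z.im : ℂ) with hY
    have hz' : z = X + Y * Complex.I := by
      rw [hX, hY]; exact (Complex.re_add_im z).symm
    rw [← hrv, hz']
    have hI : Complex.I ^ 2 = -1 := Complex.I_sq
    field_simp
    have hu : (rv:ℂ) * ((rv:ℂ))⁻¹ = 1 := mul_inv_cancel₀ hrne
    set u : ℂ := ((rv:ℂ))⁻¹ with hudef
    set R : ℂ := (rv:ℂ) with hRdef
    linear_combination
      ((ρv:ℂ) * R^2) * hI

theorem fmap_min_deriv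
    (α : ℝ) (hα₁ : 1 < α) (hα₂ : α < 2)
    (z : ℂ) (hz : z ∈ Metric.ball (0:ℂ) 1) (hz0 : z ≠ 0) :
    DifferentiableAt ℝ (fmap α) z ∧
      ‖wirtP (fmap α) z‖ - ‖wirtM (fmap α) z‖ =
        (1 + ((2 - α) / (α - 1)) * ∫ t in (‖z‖ : ℝ)..1, kern α t) ^ (1 / (α - 2)) *
          (1 / (‖z‖ ^ (1 / (α - 1)) *
            (Real.log (Real.exp 1 / ‖z‖)) ^ (1 / (α - 1)))) := by
  have hr0 : 0 < ‖z‖ := norm_pos_iff.mpr hz0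
  have hr1 : ‖z‖ < 1 := by simpa using mem_ball_zero_iff.mp hz
  set r := ‖z‖ with hrdef
  have hApos : (0:ℝ) < Afun α r := lt_of_lt_of_le one_pos (Afun_poss α hα₁ hα₂ hr0 hr1.le)
  set P' := Afun α r ^ (1 / (α - 2)) * kern α r with hP'def
  have hρ : HasDerivAt (rho α) P' r := rho_hasDeriv α hα₁ hα₂ hr0 hr1.le
  have hfeq : fmap α = fun w : ℂ => if w = 0 then 0 else (w / (‖w‖ : ℂ)) * ((rho α ‖w‖ : ℝ) : ℂ) := rfl
  have hF := fmap_hasFDeriv hz0 (rho α) P' hρ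
  rw [hfeq]
  refine ⟨hF.differentiableAt, ?_⟩
  obtain ⟨hvP, hvM⟩ := eval_test hz0 (rho α) P' hρ
  rw [hvP, hvM]
  -- positivity facts
  have hkpos : 0 < kern α r := kern_pos α hr0 (lt_trans hr1 one_lt_exp_one)
  have hP'pos : 0 < P' := mul_pos (Real.rpow_pos_of_pos hApos _) hkpos
  have hρpos : 0 < rho α r := Real.rpow_pos_of_pos hApos _
  -- key inequality : P' * r ≤ rho α r
  have hkey : P' * r ≤ rho α r := by
    have h1 : r * kern α r ≤ Afun α r := rkern_le_Afun α hα₁ hα₂ hr0 hr1.le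
    have h2 : Afun α r ^ (1 / (α - 2)) * (r * kern α r) ≤
        Afun α r ^ (1 / (α - 2)) * Afun α r := by
      exact mul_le_mul_of_nonneg_left h1 (Real.rpow_pos_of_pos hApos _).le
    have h3 : Afun α r ^ (1 / (α - 2)) * Afun α r = Afun α r ^ ((α - 1) / (α - 2)) := by
      nth_rewrite 2 [← Real.rpow_one (Afun α r)]
      rw [← Real.rpow_add hApos]
      congr 1
      have h2 : α - 2 ≠ 0 := by intro hh; nlinarith
      field_simp
      ring
    rw [h3] at h2
    calc P' * r = Afun α r ^ (1 / (α - 2)) * (r * kern α r) := by rw [hP'def]; ring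
    _ ≤ Afun α r ^ ((α - 1) / (α - 2)) := h2
    _ = rho α r := rfl
  -- compute the absolute values
  have habs1 : ‖(((rho α r / r + P') / 2 : ℝ) : ℂ)‖ = (rho α r / r + P') / 2 := by
    rw [Complex.norm_real, Real.norm_eq_abs, abs_of_nonneg]
    positivity
  have habs2 : ‖z ^ 2 * (((P' * r - rho α r) / (2 * r ^ 3) : ℝ) : ℂ)‖ =
      (rho α r - P' * r) / (2 * r) := by
    rw [norm_mul, norm_pow, Complex.norm_real, Real.norm_eq_abs, ← hrdef]
    rw [abs_of_nonpos (by
      apply div_nonpos_of_nonpos_of_nonneg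
      · linarith
      · positivity)]
    have hrne : r ≠ 0 := ne_of_gt hr0
    field_simp
    ring
  rw [habs1, habs2]
  have hrhs : (1 + (2 - α) / (α - 1) * ∫ (t : ℝ) in r..1, kern α t) ^ (1 / (α - 2)) *
      (1 / (r ^ (1 / (α - 1)) * Real.log (Real.exp 1 / r) ^ (1 / (α - 1)))) = P' := rfl
  rw [hrhs]
  field_simp
  ring
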